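/- arXiv:1512.02661 — 2 statements merged into one kernel-verified Lean document; each statement's English description precedes it below -/
import Mathlib

section
/- Suppose a'/r' < a/r < a''/r'' are rationals with positive denominators satisfying a = a' + a'' and r = r' + r''. Write these fractions in lowest terms as b'/s' < b/s < b''/s''. If there is no rational number in the open interval (a'/r', a/r) with denominator less than r, then at least one of a'/r' or a/r is already in lowest terms (i.e. s' = r' or s = r). -/
/-!
If neither `a'/r'` nor `a/r` were in lowest terms, their reduced denominators would be proper
divisors of `r'` and `r`, hence at most `r'/2` and `r/2`. The mediant of the two reduced fractions
lies strictly between them and has denominator at most `r'/2 + r/2 < r`, since `r' < r`.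
-/

theorem add_div_add_mem_Ioo {α : Type*} [Field α] [LinearOrder α] [IsStrictOrderedRing α]
    {a b c d : α} (hb : 0 < b) (hd : 0 < d) (h : a / b < c / d) :
    (a + c) / (b + d) ∈ Set.Ioo (a / b) (c / d) := by
  have hbd : 0 < b + d := add_pos hb hd
  have key : a * d < c * b := (div_lt_div_iff₀ hb hd).mp h
  constructor
  · rw [div_lt_div_iff₀ hb hbd]; linarith
  · rw [div_lt_div_iff₀ hbd hd]; linarith

namespace Rat

theorem den_div_intCast_dvd (a n : ℤ) : (((a : ℚ) / n).den : ℤ) ∣ n := by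
  simpa only [divInt_eq_div] using den_dvd a n

theorem two_mul_den_div_intCast_le {a n : ℤ} (hn : 0 < n) (h : (((a : ℚ) / n).den : ℤ) ≠ n) :
    2 * (((a : ℚ) / n).den : ℤ) ≤ n := by
  lift n to ℕ using hn.le
  push_cast at h ⊢
  have hdvd : ((a : ℚ) / n).den ∣ n := by exact_mod_cast den_div_intCast_dvd a n
  by_contra! hlt
  exact h (by exact_mod_cast (Nat.eq_of_dvd_of_lt_two_mul (by omega) hdvd (by omega)).symm)

theorem exists_mem_Ioo_den_le_add_den {x y : ℚ} (h : x < y) :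
    ∃ q ∈ Set.Ioo x y, q.den ≤ x.den + y.den := by
  refine ⟨((x.num + y.num : ℤ) : ℚ) / ((x.den + y.den : ℕ) : ℤ), ?_, ?_⟩
  · have hpos (z : ℚ) : (0 : ℚ) < z.den := by exact_mod_cast z.pos
    rw [← num_div_den x, ← num_div_den y] at h
    push_cast
    simpa only [num_div_den] using add_div_add_mem_Ioo (hpos x) (hpos y) h
  · have hdvd := den_div_intCast_dvd (x.num + y.num) ((x.den + y.den : ℕ) : ℤ)
    exact_mod_cast Int.le_of_dvd (by positivity) hdvd

end Rat

theorem reduced_of_no_small_denominator_between_general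
    (a' a r' r r'' : ℤ) (hr' : 0 < r') (hr : 0 < r) (hr'' : 0 < r'')
    (hrr : r = r' + r'')
    (h1 : (a' : ℚ) / r' < (a : ℚ) / r)
    (hgap : ∀ q : ℚ, (a' : ℚ) / r' < q → q < (a : ℚ) / r → r ≤ (q.den : ℤ)) :
    ((((a' : ℚ) / (r' : ℚ)).den : ℤ) = r') ∨ ((((a : ℚ) / (r : ℚ)).den : ℤ) = r) := by
  by_contra! hred
  have hs' := Rat.two_mul_den_div_intCast_le hr' hred.1
  have hs := Rat.two_mul_den_div_intCast_le hr hred.2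
  obtain ⟨q, ⟨hlo, hhi⟩, hq⟩ := Rat.exists_mem_Ioo_den_le_add_den h1
  have := hgap q hlo hhi
  omega

/-- Suppose `a'/r' < a/r < a''/r''` are rationals with positive denominators satisfying
`a = a' + a''` and `r = r' + r''`.  If there is no rational number in the open interval
`(a'/r', a/r)` with denominator less than `r`, then at least one of `a'/r'` or `a/r`
is already in lowest terms. -/
theorem reduced_of_no_small_denominator_between
    (a' a a'' r' r r'' : ℤ) (hr' : 0 < r') (hr : 0 < r) (hr'' : 0 < r'')
    (ha : a = a' + a'') (hrr : r = r' + r'')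
    (h1 : (a' : ℚ) / r' < (a : ℚ) / r) (h2 : (a : ℚ) / r < (a'' : ℚ) / r'')
    (hgap : ∀ q : ℚ, (a' : ℚ) / r' < q → q < (a : ℚ) / r → r ≤ (q.den : ℤ)) :
    ((((a' : ℚ) / (r' : ℚ)).den : ℤ) = r') ∨ ((((a : ℚ) / (r : ℚ)).den : ℤ) = r) :=
  reduced_of_no_small_denominator_between_general a' a r' r r'' hr' hr hr'' hrr h1 hgap
end

section
/- Fix μ_v, μ_w ∈ ℝ with μ_w < μ_v and fix Δ_w ∈ ℝ. For Δ_v ∈ ℝ define s(Δ_v) = (μ_v + μ_w)/2 − (Δ_v − Δ_w)/(μ_v − μ_w) and ρ(Δ_v) = sqrt((s(Δ_v) − μ_v)² − 2Δ_v) (whenever the radicand is nonnegative). Then the right endpoint x(Δ_v) = s(Δ_v) + ρ(Δ_v) is an increasing function of Δ_v on the region where ρ is defined and s(Δ_v) < μ_w, and x(Δ_v) → μ_w as Δ_v → ∞. -/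
open Filter Real

/-- The center of the numerical wall `W(w,v)` as a function of `Δv`. -/
noncomputable def wallCenter (μv μw Δw Δv : ℝ) : ℝ :=
  (μv + μw) / 2 - (Δv - Δw) / (μv - μw)

/-- The right endpoint of the numerical wall `W(w,v)` as a function of `Δv`. -/
noncomputable def wallRightEndpoint (μv μw Δw Δv : ℝ) : ℝ :=
  wallCenter μv μw Δw Δv +
    Real.sqrt ((wallCenter μv μw Δw Δv - μv) ^ 2 - 2 * Δv)

lemma radicand_eq (μv μw Δw Δv : ℝ) (h : μw < μv) :
    (wallCenter μv μw Δw Δv - μv) ^ 2 - 2 * Δv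
      = (μw - wallCenter μv μw Δw Δv) ^ 2 - 2 * Δw := by
  have hd : μv - μw ≠ 0 := sub_ne_zero.2 (ne_of_gt h)
  unfold wallCenter
  field_simp
  ring

lemma sqrt_le_self_of_sq (u c : ℝ) (hu : 0 ≤ u) (hc : 0 ≤ c) :
    Real.sqrt (u ^ 2 - c) ≤ u :=
  calc Real.sqrt (u ^ 2 - c) ≤ Real.sqrt (u ^ 2) := Real.sqrt_le_sqrt (by linarith)
    _ = u := Real.sqrt_sq hu

lemma sqrt_step (c u v : ℝ) (hc : 0 ≤ c) (hu : 0 < u) (huv : u ≤ v) (hcu : c ≤ u ^ 2) :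
    Real.sqrt (u ^ 2 - c) + (v - u) ≤ Real.sqrt (v ^ 2 - c) := by
  have hA0 := Real.sqrt_nonneg (u ^ 2 - c)
  have hAu : Real.sqrt (u ^ 2 - c) ≤ u := sqrt_le_self_of_sq u c hu.le hc
  apply Real.le_sqrt_of_sq_le
  have hsq := Real.sq_sqrt (by linarith : (0:ℝ) ≤ u ^ 2 - c)
  nlinarith [mul_le_mul_of_nonneg_right hAu (sub_nonneg.2 huv)]

/-- The right endpoint `x(Δv) = s(Δv) + ρ(Δv)` of the wall `W(w,v)` is an increasing
function of `Δv` on the region where the radius is defined and `s(Δv) < μw`, and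
`x(Δv) → μw` as `Δv → ∞`.  (Here `Δw ≥ 0`, as holds for any semistable character `w`.) -/
theorem wall_right_endpoint_monotone_tendsto (μv μw Δw : ℝ) (h : μw < μv) (hΔw : 0 ≤ Δw) :
    MonotoneOn (wallRightEndpoint μv μw Δw)
      {Δv : ℝ | 0 ≤ (wallCenter μv μw Δw Δv - μv) ^ 2 - 2 * Δv ∧
        wallCenter μv μw Δw Δv < μw} ∧
    Tendsto (wallRightEndpoint μv μw Δw) atTop (nhds μw) := by
  have hd : (0:ℝ) < μv - μw := sub_pos.2 h
  have hc : (0:ℝ) ≤ 2 * Δw := by linarith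
  constructor
  · intro a ha b hb hab
    obtain ⟨ha1, ha2⟩ := ha
    obtain ⟨hb1, hb2⟩ := hb
    rw [radicand_eq μv μw Δw a h] at ha1
    rw [radicand_eq μv μw Δw b h] at hb1
    unfold wallRightEndpoint
    rw [radicand_eq μv μw Δw a h, radicand_eq μv μw Δw b h]
    have hsba : wallCenter μv μw Δw b ≤ wallCenter μv μw Δw a := by
      unfold wallCenter
      have : (a - Δw) / (μv - μw) ≤ (b - Δw) / (μv - μw) := by gcongr
      linarith
    have key := sqrt_step (2 * Δw) (μw - wallCenter μv μw Δw a)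
      (μw - wallCenter μv μw Δw b) hc (by linarith) (by linarith) (by linarith)
    linarith
  · -- limit
    have hf : Tendsto (fun u : ℝ => Real.sqrt (u ^ 2 - 2 * Δw) - u) atTop (nhds 0) := by
      have h0 : Tendsto (fun u : ℝ => -(2 * Δw / u)) atTop (nhds 0) := by
        simpa using (tendsto_const_nhds.div_atTop (tendsto_id (α := ℝ)) :
          Tendsto (fun u : ℝ => (2 * Δw) / u) atTop (nhds 0)).neg
      apply tendsto_of_tendsto_of_tendsto_of_le_of_le' h0 tendsto_const_nhds
      · filter_upwards [eventually_ge_atTop (max 1 (Real.sqrt (2 * Δw)))] with u hu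
        have hu1 : (1:ℝ) ≤ u := le_trans (le_max_left _ _) hu
        have hu0 : (0:ℝ) < u := by linarith
        have hcu : 2 * Δw ≤ u ^ 2 := by
          have := Real.sqrt_le_sqrt hc  -- dummy
          have h2 : Real.sqrt (2 * Δw) ≤ u := le_trans (le_max_right _ _) hu
          nlinarith [Real.sq_sqrt hc, Real.sqrt_nonneg (2 * Δw)]
        have : u - 2 * Δw / u ≤ Real.sqrt (u ^ 2 - 2 * Δw) := by
          apply Real.le_sqrt_of_sq_le
          have hid : (u - 2 * Δw / u) ^ 2 * u ^ 2 = (u ^ 2 - 2 * Δw) ^ 2 := by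
            field_simp
          have h1 : (u ^ 2 - 2 * Δw) ^ 2 ≤ (u ^ 2 - 2 * Δw) * u ^ 2 := by nlinarith
          have hu2 : (0:ℝ) < u ^ 2 := by positivity
          have h2 : (u - 2 * Δw / u) ^ 2 * u ^ 2 ≤ (u ^ 2 - 2 * Δw) * u ^ 2 := by
            rw [hid]; exact h1
          exact le_of_mul_le_mul_right h2 hu2
        linarith
      · filter_upwards [eventually_ge_atTop (0:ℝ)] with u hu
        have := sqrt_le_self_of_sq u (2 * Δw) hu hc
        linarith
    have hu : Tendsto (fun Δv : ℝ => μw - wallCenter μv μw Δw Δv) atTop atTop := by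
      unfold wallCenter
      have h1 : Tendsto (fun Δv : ℝ => (Δv - Δw) / (μv - μw)) atTop atTop := by
        apply Tendsto.atTop_div_const hd
        exact tendsto_atTop_add_const_right _ _ tendsto_id
      have := tendsto_atTop_add_const_right _ (μw - (μv + μw) / 2) h1
      apply this.congr
      intro x; ring
    have heq : wallRightEndpoint μv μw Δw
        = fun Δv => μw + (Real.sqrt ((μw - wallCenter μv μw Δw Δv) ^ 2 - 2 * Δw)
            - (μw - wallCenter μv μw Δw Δv)) := by
      funext Δv
      unfold wallRightEndpoint
      rw [radicand_eq μv μw Δw Δv h]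
      ring
    rw [heq]
    simpa using tendsto_const_nhds.add (hf.comp hu)
end
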